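/- Fix m ≥ 1 and let f : ℤ → ℚ be defined by f(−2) = 1/36, f(−1) = 1/6, f(0) = 1, f(1) = 8, and f(k) = 8f(k−1) − f(k−2) + 6f(k−3) for k ≥ 2. Let c = c_{m−1} ... c_0 be a codeword of OSC(m), with symbols viewed as natural numbers in {0,...,7}. For 0 ≤ i ≤ m−1 define: y_{i,1} = 1 if i+2 ≤ m−1, c_{i+2} = 0, c_{i+1} = 2, and c_i ≠ 0, and y_{i,1} = 0 otherwise; y_{i,2} = 1 if i+1 ≤ m−1 and either (c_{i+1} = 0 and c_i ∈ {3,4,5,6,7}) or (c_{i+1} = 7 and c_i ∈ {6,7}), and y_{i,2} = 0 otherwise; θ_i = 1 if c_i ≠ 0 and θ_i = 0 otherwise. Then the lexicographic index g(c) of c in OSC(m) satisfies, as an equality of rational numbers, g(c) = Σ_{i=0}^{m−1} [ (c_i − y_{i,1} − (1/2)y_{i,2}) · f(i) + θ_i (1 − y_{i,1}) ( (3y_{i,2} − 1/2) · f(i−1) + 3 f(i−2) ) ]. -/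

import Mathlib

/-- The OS-LOCO code: words of length `m` over the alphabet `{0,...,7}`
(position `m-1` most significant) containing no contiguous subword `0 2 0`
and no contiguous subword `7 5 7`. -/
def OSC (m : ℕ) : Set (Fin m → Fin 8) :=
  {c | ∀ i : ℕ, ∀ h : i + 2 < m,
      ¬(c ⟨i + 2, h⟩ = 0 ∧ c ⟨i + 1, by omega⟩ = 2 ∧ c ⟨i, by omega⟩ = 0) ∧
      ¬(c ⟨i + 2, h⟩ = 7 ∧ c ⟨i + 1, by omega⟩ = 5 ∧ c ⟨i, by omega⟩ = 7)}

/-- `w` is lexicographically smaller than `c` (position `m-1` most significant):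
at the most significant position where they differ, `w` has the smaller symbol. -/
def wordLT {m q : ℕ} (w c : Fin m → Fin q) : Prop :=
  ∃ k : Fin m, w k < c k ∧ ∀ j : Fin m, k < j → w j = c j

/-- The lexicographic index of `c` in the code `C`: the number of codewords of
`C` lexicographically smaller than `c`. -/
noncomputable def lexIndex {m q : ℕ} (C : Set (Fin m → Fin q)) (c : Fin m → Fin q) : ℕ :=
  {w ∈ C | wordLT w c}.ncard

/-- The natural-number value of symbol `c_i`, with an out-of-alphabet default
for out-of-range indices. -/
def extVal {m q : ℕ} (c : Fin m → Fin q) (i : ℕ) : ℕ :=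
  if h : i < m then (c ⟨i, h⟩ : ℕ) else q

/-- `y_{i,1} = 1` iff `i+2 ≤ m-1`, `c_{i+2} = 0`, `c_{i+1} = 2`, and `c_i ≠ 0`. -/
def osY1 {m : ℕ} (c : Fin m → Fin 8) (i : ℕ) : ℚ :=
  if i + 2 < m ∧ extVal c (i + 2) = 0 ∧ extVal c (i + 1) = 2 ∧ extVal c i ≠ 0 then 1 else 0

/-- `y_{i,2} = 1` iff `i+1 ≤ m-1` and either (`c_{i+1} = 0` and `c_i ∈ {3,...,7}`)
or (`c_{i+1} = 7` and `c_i ∈ {6,7}`). -/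
def osY2 {m : ℕ} (c : Fin m → Fin 8) (i : ℕ) : ℚ :=
  if i + 1 < m ∧ ((extVal c (i + 1) = 0 ∧ extVal c i ∈ ({3, 4, 5, 6, 7} : Finset ℕ)) ∨
      (extVal c (i + 1) = 7 ∧ extVal c i ∈ ({6, 7} : Finset ℕ))) then 1 else 0

/-- `θ_i = 1` iff `c_i ≠ 0`. -/
def osTheta {m : ℕ} (c : Fin m → Fin 8) (i : ℕ) : ℚ :=
  if extVal c i ≠ 0 then 1 else 0

open Classical Finset

def winOk (g : ℕ → ℕ) (i : ℕ) : Prop :=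
  ¬(g (i+2) = 0 ∧ g (i+1) = 2 ∧ g i = 0) ∧ ¬(g (i+2) = 7 ∧ g (i+1) = 5 ∧ g i = 7)

def nw (g : ℕ → ℕ) : Prop := ∀ i : ℕ, winOk g i

lemma winOk_of_top (g : ℕ → ℕ) (i : ℕ) (h : g (i+2) = 8) : winOk g i := by
  constructor <;> rintro ⟨h1, -⟩ <;> omega

lemma winOk_congr {g h : ℕ → ℕ} (i : ℕ) (e0 : g i = h i) (e1 : g (i+1) = h (i+1))
    (e2 : g (i+2) = h (i+2)) : winOk g i ↔ winOk h i := by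
  unfold winOk; rw [e0, e1, e2]

def extc (b a : ℕ) {k : ℕ} (w : Fin k → Fin 8) : ℕ → ℕ :=
  fun i => if h : i < k then (w ⟨i, h⟩ : ℕ) else if i = k then a else if i = k + 1 then b else 8

lemma extc_lt {b a k : ℕ} {w : Fin k → Fin 8} {i : ℕ} (h : i < k) :
    extc b a w i = (w ⟨i, h⟩ : ℕ) := dif_pos h

lemma extc_k {b a k : ℕ} {w : Fin k → Fin 8} : extc b a w k = a := by simp [extc]

lemma extc_k1 {b a k : ℕ} {w : Fin k → Fin 8} : extc b a w (k+1) = b := by simp [extc]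

lemma extc_big {b a k : ℕ} {w : Fin k → Fin 8} {i : ℕ} (h : k + 2 ≤ i) :
    extc b a w i = 8 := by
  unfold extc
  rw [dif_neg (by omega), if_neg (by omega), if_neg (by omega)]

def allowedP (b a t : ℕ) : Prop := ¬(b = 0 ∧ a = 2 ∧ t = 0) ∧ ¬(b = 7 ∧ a = 5 ∧ t = 7)

lemma nw_snoc {b a k : ℕ} (w : Fin (k+1) → Fin 8) :
    nw (extc b a w) ↔
      allowedP b a (w (Fin.last k)) ∧ nw (extc a (w (Fin.last k)) (Fin.init w)) := by
  have hag : ∀ j, j ≤ k + 1 →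
      extc b a w j = extc (a) ((w (Fin.last k) : ℕ)) (Fin.init w) j := by
    intro j hj
    rcases lt_trichotomy j k with h | h | h
    · rw [extc_lt (show j < k + 1 by omega), extc_lt h]
      simp [Fin.init]
    · subst h
      rw [extc_lt (show j < j + 1 by omega), extc_k]
      congr 1
    · have : j = k + 1 := by omega
      subst this
      rw [extc_k, extc_k1]
  constructor
  · intro h
    refine ⟨?_, ?_⟩
    · have hk := h k
      unfold winOk at hk
      rw [show k + 2 = (k+1) + 1 from rfl, extc_k1, extc_k,
        extc_lt (show k < k + 1 by omega)] at hk
      exact hk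
    · intro i
      rcases lt_or_ge i k with hi | hi
      · rw [← winOk_congr i (hag i (by omega)) (hag (i+1) (by omega)) (hag (i+2) (by omega))]
        exact h i
      · exact winOk_of_top _ _ (extc_big (by omega))
  · rintro ⟨hal, h'⟩ i
    rcases lt_trichotomy i k with hi | hi | hi
    · rw [winOk_congr i (hag i (by omega)) (hag (i+1) (by omega)) (hag (i+2) (by omega))]
      exact h' i
    · subst hi
      have e2 : extc b a w (i + 2) = b := extc_k1
      have e1 : extc b a w (i + 1) = a := extc_k
      have e0 : extc b a w i = (w (Fin.last i) : ℕ) := by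
        rw [extc_lt (show i < i + 1 by omega)]; rfl
      unfold winOk
      rw [e0, e1, e2]
      exact hal
    · exact winOk_of_top _ _ (extc_big (by omega))

noncomputable def Nk (b a k : ℕ) : ℕ :=
  (Finset.univ.filter fun w : Fin k → Fin 8 => nw (extc b a w)).card

lemma Nk_succ (b a k : ℕ) :
    Nk b a (k+1) = ∑ t : Fin 8, if allowedP b a (t : ℕ) then Nk a (t : ℕ) k else 0 := by
  unfold Nk
  rw [Finset.card_eq_sum_card_fiberwise
    (f := fun w : Fin (k+1) → Fin 8 => w (Fin.last k)) (t := Finset.univ)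
    (fun x _ => Finset.mem_univ _)]
  refine Finset.sum_congr rfl fun t _ => ?_
  rw [Finset.filter_filter]
  by_cases hal : allowedP b a (t : ℕ)
  · rw [if_pos hal]
    refine Finset.card_nbij' (i := fun w => Fin.init w) (j := fun x => Fin.snoc x t)
      ?_ ?_ ?_ ?_
    · intro w hw
      simp only [Finset.mem_coe, Finset.mem_filter, Finset.mem_univ, true_and] at hw ⊢
      rw [nw_snoc] at hw
      rw [hw.2] at hw
      exact hw.1.2
    · intro x hx
      simp only [Finset.mem_coe, Finset.mem_filter, Finset.mem_univ, true_and] at hx ⊢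
      refine ⟨?_, Fin.snoc_last _ _⟩
      rw [nw_snoc, Fin.snoc_last, Fin.init_snoc]
      exact ⟨hal, hx⟩
    · intro w hw
      simp only [Finset.mem_coe, Finset.mem_filter, Finset.mem_univ, true_and] at hw
      simp only
      rw [← hw.2]
      exact Fin.snoc_init_self w
    · intro x hx
      exact Fin.init_snoc _ _
  · rw [if_neg hal]
    rw [Finset.card_eq_zero, Finset.filter_eq_empty_iff]
    intro w _
    rintro ⟨hnw, hlast⟩
    rw [nw_snoc, hlast] at hnw
    exact hal hnw.1

lemma Nk_zero (b a : ℕ) : Nk b a 0 = 1 := by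
  unfold Nk
  rw [Finset.filter_true_of_mem, Finset.card_univ]
  · simp
  · intro w _ i
    exact winOk_of_top _ _ (extc_big (by omega))

def V : ℕ → ℕ × ℕ × ℕ
  | 0 => (1, 1, 1)
  | k+1 => (6 * (V k).1 + 2 * (V k).2.1,
            5 * (V k).1 + 2 * (V k).2.1 + (V k).2.2,
            6 * (V k).1 + (V k).2.1)

def Av (k : ℕ) : ℕ := (V k).1
def Cv (k : ℕ) : ℕ := (V k).2.1
def Bv (k : ℕ) : ℕ := (V k).2.2

lemma Nk_class : ∀ k b a : ℕ, Nk b a k =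
    if (b = 0 ∧ a = 2) ∨ (b = 7 ∧ a = 5) then Bv k
    else if a = 0 ∨ a = 7 then Cv k else Av k := by
  intro k
  induction k with
  | zero => intro b a; rw [Nk_zero]; split_ifs <;> rfl
  | succ k ih =>
    intro b a
    rw [Nk_succ]
    rw [Finset.sum_congr rfl (fun t _ => by rw [ih a (t : ℕ)]), Fin.sum_univ_eight]
    simp only [show ((0:Fin 8):ℕ) = 0 from rfl, show ((1:Fin 8):ℕ) = 1 from rfl,
      show ((2:Fin 8):ℕ) = 2 from rfl, show ((3:Fin 8):ℕ) = 3 from rfl,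
      show ((4:Fin 8):ℕ) = 4 from rfl, show ((5:Fin 8):ℕ) = 5 from rfl,
      show ((6:Fin 8):ℕ) = 6 from rfl, show ((7:Fin 8):ℕ) = 7 from rfl]
    by_cases h1 : b = 0 ∧ a = 2
    · obtain ⟨rfl, rfl⟩ := h1
      norm_num [allowedP, Av, Bv, Cv, V]
      ring
    by_cases h2 : b = 7 ∧ a = 5
    · obtain ⟨rfl, rfl⟩ := h2
      norm_num [allowedP, Av, Bv, Cv, V]
      ring
    have hal : ∀ t : ℕ, allowedP b a t := by
      intro t; constructor
      · rintro ⟨rfl, rfl, rfl⟩; exact h1 ⟨rfl, rfl⟩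
      · rintro ⟨rfl, rfl, rfl⟩; exact h2 ⟨rfl, rfl⟩
    simp only [if_pos (hal _)]
    by_cases h3 : a = 0
    · subst h3
      norm_num [Av, Bv, Cv, V, h1, h2]
      ring
    by_cases h4 : a = 7
    · subst h4
      norm_num [Av, Bv, Cv, V, h1, h2]
      ring
    · norm_num [Av, Bv, Cv, V, h1, h2, h3, h4]
      ring

/-! ### relating OSC to `nw` -/

lemma extVal_big {m : ℕ} (c : Fin m → Fin 8) {i : ℕ} (h : ¬ i < m) :
    extVal c i = 8 := dif_neg h

lemma extVal_lt {m : ℕ} (c : Fin m → Fin 8) {i : ℕ} (h : i < m) :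
    extVal c i = (c ⟨i, h⟩ : ℕ) := dif_pos h

lemma osc_iff {m : ℕ} (c : Fin m → Fin 8) :
    c ∈ OSC m ↔ nw (extVal c) := by
  constructor
  · intro h i
    by_cases hi : i + 2 < m
    · have := h i hi
      unfold winOk
      rw [extVal_lt c hi, extVal_lt c (show i + 1 < m by omega),
        extVal_lt c (show i < m by omega)]
      simp only [Fin.ext_iff] at this
      exact this
    · exact winOk_of_top _ _ (extVal_big c hi)
  · intro h i hi
    have := h i
    unfold winOk at this
    rw [extVal_lt c hi, extVal_lt c (show i + 1 < m by omega),
      extVal_lt c (show i < m by omega)] at this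
    simp only [Fin.ext_iff]
    exact this

/-! ### fiber counting -/

/-- the number of codewords agreeing with `c` above position `i` and smaller at `i` -/
noncomputable def Fib {m : ℕ} (c : Fin m → Fin 8) (i : Fin m) : ℕ :=
  (Finset.univ.filter fun w : Fin m → Fin 8 =>
    w ∈ OSC m ∧ (∀ j : Fin m, i < j → w j = c j) ∧ w i < c i).card

lemma lexIndex_eq_sum {m : ℕ} (c : Fin m → Fin 8) :
    lexIndex (OSC m) c = ∑ i : Fin m, Fib c i := by
  classical
  have hset : {w ∈ OSC m | wordLT w c} =
      ↑(Finset.univ.filter fun w : Fin m → Fin 8 => w ∈ OSC m ∧ wordLT w c) := by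
    ext w
    simp [Set.mem_setOf_eq]
  rw [lexIndex, hset, Set.ncard_coe_finset]
  cases m with
  | zero =>
    simp [wordLT]
  | succ n =>
    have hcard := Finset.card_eq_sum_card_fiberwise
      (f := fun w : Fin (n+1) → Fin 8 =>
        if h : (Finset.univ.filter fun k => w k ≠ c k).Nonempty then
          (Finset.univ.filter fun k => w k ≠ c k).max' h else 0)
      (s := Finset.univ.filter fun w : Fin (n+1) → Fin 8 => w ∈ OSC (n+1) ∧ wordLT w c)
      (t := Finset.univ) (fun x _ => Finset.mem_univ _)
    rw [hcard]
    refine Finset.sum_congr rfl fun i _ => ?_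
    unfold Fib
    rw [Finset.filter_filter]
    apply Finset.card_nbij (i := id)
    · intro w hw
      simp only [Finset.mem_coe, Finset.mem_filter, Finset.mem_univ, true_and] at hw ⊢
      obtain ⟨⟨hosc, k, hk1, hk2⟩, hFw⟩ := hw
      have hkD : k ∈ Finset.univ.filter fun j => w j ≠ c j := by
        simp only [Finset.mem_filter, Finset.mem_univ, true_and]
        exact ne_of_lt hk1
      have hne : (Finset.univ.filter fun j => w j ≠ c j).Nonempty := ⟨k, hkD⟩
      have hmax : (Finset.univ.filter fun j => w j ≠ c j).max' hne = k := by
        apply le_antisymm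
        · by_contra hlt
          push_neg at hlt
          have hmem := Finset.max'_mem _ hne
          simp only [Finset.mem_filter, Finset.mem_univ, true_and] at hmem
          exact hmem (hk2 _ hlt)
        · exact Finset.le_max' _ _ hkD
      rw [dif_pos hne, hmax] at hFw
      subst hFw
      exact ⟨hosc, hk2, hk1⟩
    · exact fun a _ b _ h => h
    · intro w hw
      simp only [Finset.coe_filter, Finset.mem_filter, Finset.mem_univ, true_and,
        Set.mem_setOf_eq] at hw
      refine ⟨w, ?_, rfl⟩
      simp only [Finset.coe_filter, Finset.mem_filter, Finset.mem_univ, true_and,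
        Set.mem_setOf_eq]
      refine ⟨⟨hw.1, ⟨i, hw.2.2, hw.2.1⟩⟩, ?_⟩
      have hkD : i ∈ Finset.univ.filter fun j => w j ≠ c j := by
        simp only [Finset.mem_filter, Finset.mem_univ, true_and]
        exact ne_of_lt hw.2.2
      have hne : (Finset.univ.filter fun j => w j ≠ c j).Nonempty := ⟨i, hkD⟩
      rw [dif_pos hne]
      apply le_antisymm
      · by_contra hlt
        push_neg at hlt
        have hmem := Finset.max'_mem _ hne
        simp only [Finset.mem_filter, Finset.mem_univ, true_and] at hmem
        exact hmem (hw.2.1 _ hlt)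
      · exact Finset.le_max' _ _ hkD

def restr {m : ℕ} (i : Fin m) (w : Fin m → Fin 8) : Fin (i : ℕ) → Fin 8 :=
  fun j => w ⟨(j : ℕ), by omega⟩

def emb {m : ℕ} (c : Fin m → Fin 8) (i : Fin m) (t : Fin 8) (x : Fin (i : ℕ) → Fin 8) :
    Fin m → Fin 8 :=
  fun j => if h : (j : ℕ) < (i : ℕ) then x ⟨(j : ℕ), h⟩ else if (j : ℕ) = (i : ℕ) then t else c j

lemma nw_mid {m : ℕ} (c : Fin m → Fin 8) (hc : nw (extVal c)) (i : Fin m) (t : Fin 8)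
    (w : Fin m → Fin 8) (hup : ∀ j : Fin m, i < j → w j = c j) (hit : w i = t) :
    nw (extVal w) ↔
      allowedP (extVal c ((i : ℕ) + 2)) (extVal c ((i : ℕ) + 1)) (t : ℕ) ∧
        nw (extc (extVal c ((i : ℕ) + 1)) (t : ℕ) (restr i w)) := by
  have hup2 : ∀ j : ℕ, (i : ℕ) + 1 ≤ j → extVal w j = extVal c j := by
    intro j hj
    by_cases h : j < m
    · rw [extVal_lt w h, extVal_lt c h]
      exact congrArg _ (hup ⟨j, h⟩ (by simp [Fin.lt_def]; omega))
    · rw [extVal_big w h, extVal_big c h]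
  have hwi : extVal w (i : ℕ) = (t : ℕ) := by
    rw [extVal_lt w i.isLt]
    rw [show (⟨(i : ℕ), i.isLt⟩ : Fin m) = i from Fin.eta i i.isLt, hit]
  have hag : ∀ j : ℕ, j ≤ (i : ℕ) + 1 →
      extVal w j = extc (extVal c ((i : ℕ) + 1)) (t : ℕ) (restr i w) j := by
    intro j hj
    rcases lt_trichotomy j (i : ℕ) with h | h | h
    · rw [extVal_lt w (by omega), extc_lt h]
      rfl
    · subst h
      rw [extc_k, hwi]
    · have : j = (i : ℕ) + 1 := by omega
      subst this
      rw [extc_k1]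
      exact hup2 _ le_rfl
  constructor
  · intro h
    refine ⟨?_, ?_⟩
    · have hwin := h (i : ℕ)
      unfold winOk at hwin
      rw [hup2 ((i : ℕ) + 2) (by omega), hup2 ((i : ℕ) + 1) (by omega), hwi] at hwin
      exact hwin
    · intro j
      rcases lt_or_ge j (i : ℕ) with hij | hij
      · rw [← winOk_congr j (hag j (by omega)) (hag (j+1) (by omega)) (hag (j+2) (by omega))]
        exact h j
      · exact winOk_of_top _ _ (extc_big (by omega))
  · rintro ⟨hal, h'⟩ j
    rcases lt_trichotomy j (i : ℕ) with hij | hij | hij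
    · rw [winOk_congr j (hag j (by omega)) (hag (j+1) (by omega)) (hag (j+2) (by omega))]
      exact h' j
    · subst hij
      unfold winOk
      rw [hup2 ((i : ℕ) + 2) (by omega), hup2 ((i : ℕ) + 1) (by omega), hwi]
      exact hal
    · have hwin := hc j
      unfold winOk at hwin ⊢
      rw [hup2 (j + 2) (by omega), hup2 (j + 1) (by omega), hup2 j (by omega)]
      exact hwin

lemma fib_eq {m : ℕ} (c : Fin m → Fin 8) (hc : c ∈ OSC m) (i : Fin m) :
    Fib c i = ∑ t : Fin 8, if ((t : ℕ) < (c i : ℕ) ∧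
        allowedP (extVal c ((i : ℕ) + 2)) (extVal c ((i : ℕ) + 1)) (t : ℕ)) then
        Nk (extVal c ((i : ℕ) + 1)) (t : ℕ) (i : ℕ) else 0 := by
  classical
  have hcnw := (osc_iff c).1 hc
  unfold Fib
  rw [Finset.card_eq_sum_card_fiberwise
    (f := fun w : Fin m → Fin 8 => w i) (t := Finset.univ) (fun x _ => Finset.mem_univ _)]
  refine Finset.sum_congr rfl fun t _ => ?_
  rw [Finset.filter_filter]
  by_cases hgood : (t : ℕ) < (c i : ℕ) ∧
      allowedP (extVal c ((i : ℕ) + 2)) (extVal c ((i : ℕ) + 1)) (t : ℕ)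
  · rw [if_pos hgood]
    unfold Nk
    apply Finset.card_nbij (i := fun w => restr i w)
    · intro w hw
      simp only [Finset.mem_coe, Finset.mem_filter, Finset.mem_univ, true_and] at hw ⊢
      obtain ⟨⟨hosc, hup, hlt⟩, hwi⟩ := hw
      exact ((nw_mid c hcnw i t w hup hwi).1 ((osc_iff w).1 hosc)).2
    · intro w1 h1 w2 h2 heq
      simp only [Finset.coe_filter, Set.mem_setOf_eq, Finset.mem_univ, true_and] at h1 h2
      funext j
      rcases lt_trichotomy (j : ℕ) (i : ℕ) with hj | hj | hj
      · exact congrFun heq ⟨(j : ℕ), hj⟩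
      · have : j = i := Fin.ext hj
        subst this
        rw [h1.2, h2.2]
      · have hj' : i < j := by rw [Fin.lt_def]; omega
        rw [h1.1.2.1 j hj', h2.1.2.1 j hj']
    · intro x hx
      simp only [Finset.coe_filter, Set.mem_setOf_eq, Finset.mem_univ, true_and,
        Set.mem_image] at hx ⊢
      refine ⟨emb c i t x, ⟨⟨?_, ?_, ?_⟩, ?_⟩, ?_⟩
      · -- emb ∈ OSC
        rw [osc_iff]
        have hup : ∀ j : Fin m, i < j → emb c i t x j = c j := by
          intro j hj
          have hj' : (i : ℕ) < (j : ℕ) := hj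
          unfold emb
          rw [dif_neg (by omega), if_neg (by omega)]
        have hit : emb c i t x i = t := by
          unfold emb
          rw [dif_neg (by omega), if_pos rfl]
        rw [nw_mid c hcnw i t _ hup hit]
        refine ⟨hgood.2, ?_⟩
        have : restr i (emb c i t x) = x := by
          funext j
          unfold restr emb
          rw [dif_pos (j.isLt)]
        rw [this]
        exact hx
      · intro j hj
        have hj' : (i : ℕ) < (j : ℕ) := hj
        unfold emb
        rw [dif_neg (by omega), if_neg (by omega)]
      · have : emb c i t x i = t := by
          unfold emb
          rw [dif_neg (by omega), if_pos rfl]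
        rw [this]
        exact hgood.1
      · unfold emb
        rw [dif_neg (by omega), if_pos rfl]
      · funext j
        unfold restr emb
        rw [dif_pos (j.isLt)]
  · rw [if_neg hgood]
    rw [Finset.card_eq_zero, Finset.filter_eq_empty_iff]
    intro w _
    rintro ⟨⟨hosc, hup, hlt⟩, hwi⟩
    apply hgood
    have h1 : (t : ℕ) < (c i : ℕ) := by rw [← hwi]; exact hlt
    exact ⟨h1, ((nw_mid c hcnw i t w hup hwi).1 ((osc_iff w).1 hosc)).1⟩

/-! ### the rational arithmetic -/

lemma keyQ (F0 F1 F2 : ℚ) (b a : ℕ) (v : Fin 8) :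
    (∑ t : Fin 8, if ((t : ℕ) < (v : ℕ) ∧ allowedP b a (t : ℕ)) then
        (if (a = 0 ∧ (t : ℕ) = 2) ∨ (a = 7 ∧ (t : ℕ) = 5) then F0/2 + 3*F1
          else if (t : ℕ) = 0 ∨ (t : ℕ) = 7 then F0 - F1/2 + 3*F2 else F0) else 0)
    = (((v : ℕ) : ℚ) - (if b = 0 ∧ a = 2 ∧ (v : ℕ) ≠ 0 then (1:ℚ) else 0)
          - (1/2) * (if (a = 0 ∧ 3 ≤ (v : ℕ)) ∨ (a = 7 ∧ 6 ≤ (v : ℕ)) then (1:ℚ) else 0)) * F0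
        + (if (v : ℕ) ≠ 0 then (1:ℚ) else 0)
          * (1 - (if b = 0 ∧ a = 2 ∧ (v : ℕ) ≠ 0 then (1:ℚ) else 0)) *
          ((3 * (if (a = 0 ∧ 3 ≤ (v : ℕ)) ∨ (a = 7 ∧ 6 ≤ (v : ℕ)) then (1:ℚ) else 0) - 1/2) * F1
            + 3 * F2) := by
  rw [Fin.sum_univ_eight]
  simp only [show ((0:Fin 8):ℕ) = 0 from rfl, show ((1:Fin 8):ℕ) = 1 from rfl,
    show ((2:Fin 8):ℕ) = 2 from rfl, show ((3:Fin 8):ℕ) = 3 from rfl,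
    show ((4:Fin 8):ℕ) = 4 from rfl, show ((5:Fin 8):ℕ) = 5 from rfl,
    show ((6:Fin 8):ℕ) = 6 from rfl, show ((7:Fin 8):ℕ) = 7 from rfl]
  by_cases ha0 : a = 0
  · subst ha0
    fin_cases v <;> norm_num [allowedP] <;> ring
  by_cases ha7 : a = 7
  · subst ha7
    fin_cases v <;> norm_num [allowedP] <;> ring
  by_cases hP1 : b = 0 ∧ a = 2
  · obtain ⟨rfl, rfl⟩ := hP1
    fin_cases v <;> norm_num [allowedP] <;> ring
  by_cases hP2 : b = 7 ∧ a = 5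
  · obtain ⟨rfl, rfl⟩ := hP2
    fin_cases v <;> norm_num [allowedP] <;> ring
  have hal : ∀ n : ℕ, allowedP b a n := by
    intro n
    constructor
    · rintro ⟨h1, h2, h3⟩; exact hP1 ⟨h1, h2⟩
    · rintro ⟨h1, h2, h3⟩; exact hP2 ⟨h1, h2⟩
  have hnY1 : ¬(b = 0 ∧ a = 2 ∧ (v : ℕ) ≠ 0) := by
    rintro ⟨h1, h2, h3⟩; exact hP1 ⟨h1, h2⟩
  simp only [hal, and_true, if_neg hnY1]
  fin_cases v <;> norm_num [ha0, ha7] <;> ring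

theorem stmt6 (m : ℕ) (hm : 1 ≤ m) (f : ℤ → ℚ)
    (hb2 : f (-2) = 1 / 36) (hb1 : f (-1) = 1 / 6) (hb0 : f 0 = 1) (hb : f 1 = 8)
    (hrec : ∀ k : ℤ, 2 ≤ k → f k = 8 * f (k - 1) - f (k - 2) + 6 * f (k - 3))
    (c : Fin m → Fin 8) (hc : c ∈ OSC m) :
    (lexIndex (OSC m) c : ℚ) =
      ∑ i : Fin m,
        ((((c i : ℕ) : ℚ) - osY1 c (i : ℕ) - (1 / 2) * osY2 c (i : ℕ)) * f ((i : ℕ) : ℤ)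
          + osTheta c (i : ℕ) * (1 - osY1 c (i : ℕ)) *
              ((3 * osY2 c (i : ℕ) - 1 / 2) * f (((i : ℕ) : ℤ) - 1)
                + 3 * f (((i : ℕ) : ℤ) - 2))) := by
  classical
  -- extended recurrence
  have hrec' : ∀ k : ℕ, f ((k : ℤ) + 1) =
      8 * f (k : ℤ) - f ((k : ℤ) - 1) + 6 * f ((k : ℤ) - 2) := by
    intro k
    cases k with
    | zero => norm_num [hb, hb0, hb1, hb2]
    | succ n =>
      have := hrec ((n : ℤ) + 2) (by omega)
      have e1 : ((n : ℤ) + 2) - 1 = (n : ℤ) + 1 := by ring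
      have e2 : ((n : ℤ) + 2) - 2 = (n : ℤ) := by ring
      have e3 : ((n : ℤ) + 2) - 3 = (n : ℤ) - 1 := by ring
      rw [e1, e2, e3] at this
      push_cast
      rw [show ((n:ℤ) + 1 + 1) = (n:ℤ) + 2 from by ring,
        show ((n:ℤ) + 1 - 1) = (n:ℤ) from by ring,
        show ((n:ℤ) + 1 - 2) = (n:ℤ) - 1 from by ring, this]
  -- values of Av, Cv, Bv
  have vals : ∀ k : ℕ, ((Av k : ℚ) = f (k : ℤ)) ∧
      ((Cv k : ℚ) = f (k : ℤ) - f ((k : ℤ) - 1) / 2 + 3 * f ((k : ℤ) - 2)) ∧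
      ((Bv k : ℚ) = f (k : ℤ) / 2 + 3 * f ((k : ℤ) - 1)) := by
    intro k
    induction k with
    | zero =>
      norm_num [Av, Cv, Bv, V, hb0, hb1, hb2]
    | succ n ih =>
      obtain ⟨ihA, ihC, ihB⟩ := ih
      have g2 : ((n:ℤ) + 1 - 1) = (n:ℤ) := by ring
      have g3 : ((n:ℤ) + 1 - 2) = (n:ℤ) - 1 := by ring
      have hr := hrec' n
      refine ⟨?_, ?_, ?_⟩
      · show ((V (n+1)).1 : ℚ) = _
        rw [show (V (n+1)).1 = 6 * (V n).1 + 2 * (V n).2.1 from rfl]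
        push_cast
        rw [show ((V n).1 : ℚ) = (Av n : ℚ) from rfl, show ((V n).2.1 : ℚ) = (Cv n : ℚ) from rfl,
          ihA, ihC, hr]
        ring
      · show ((V (n+1)).2.1 : ℚ) = _
        rw [show (V (n+1)).2.1 = 5 * (V n).1 + 2 * (V n).2.1 + (V n).2.2 from rfl]
        push_cast
        rw [show ((V n).1 : ℚ) = (Av n : ℚ) from rfl, show ((V n).2.1 : ℚ) = (Cv n : ℚ) from rfl,
          show ((V n).2.2 : ℚ) = (Bv n : ℚ) from rfl, ihA, ihC, ihB, g2, g3, hr]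
        ring
      · show ((V (n+1)).2.2 : ℚ) = _
        rw [show (V (n+1)).2.2 = 6 * (V n).1 + (V n).2.1 from rfl]
        push_cast
        rw [show ((V n).1 : ℚ) = (Av n : ℚ) from rfl, show ((V n).2.1 : ℚ) = (Cv n : ℚ) from rfl,
          ihA, ihC, g2, hr]
        ring
  rw [lexIndex_eq_sum c, Nat.cast_sum]
  refine Finset.sum_congr rfl fun i _ => ?_
  set b := extVal c ((i : ℕ) + 2) with hbdef
  set a := extVal c ((i : ℕ) + 1) with hadef
  have hvi : extVal c (i : ℕ) = ((c i : ℕ)) := by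
    rw [extVal_lt c i.isLt]
  have hY1 : osY1 c (i : ℕ) = if b = 0 ∧ a = 2 ∧ ((c i : ℕ)) ≠ 0 then (1:ℚ) else 0 := by
    unfold osY1
    rw [hvi, ← hbdef, ← hadef]
    refine if_congr ⟨fun h => ⟨h.2.1, h.2.2.1, h.2.2.2⟩, fun h => ⟨?_, h.1, h.2.1, h.2.2⟩⟩ rfl rfl
    by_contra hlt
    rw [hbdef, extVal_big c hlt] at h
    omega
  have hY2 : osY2 c (i : ℕ) =
      if (a = 0 ∧ 3 ≤ ((c i : ℕ))) ∨ (a = 7 ∧ 6 ≤ ((c i : ℕ))) then (1:ℚ) else 0 := by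
    unfold osY2
    rw [hvi, ← hadef]
    refine if_congr ⟨fun h => ?_, fun h => ?_⟩ rfl rfl
    · obtain ⟨h1, h2⟩ := h
      have hlt8 := (c i).isLt
      rcases h2 with ⟨h2, h3⟩ | ⟨h2, h3⟩
      · left; refine ⟨h2, ?_⟩; simp only [Finset.mem_insert, Finset.mem_singleton] at h3; omega
      · right; refine ⟨h2, ?_⟩; simp only [Finset.mem_insert, Finset.mem_singleton] at h3; omega
    · have hlt8 := (c i).isLt
      have hin : (i : ℕ) + 1 < m := by
        by_contra hlt
        rw [hadef, extVal_big c hlt] at h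
        omega
      refine ⟨hin, ?_⟩
      rcases h with ⟨h1, h2⟩ | ⟨h1, h2⟩
      · left; refine ⟨h1, ?_⟩; simp only [Finset.mem_insert, Finset.mem_singleton]; omega
      · right; refine ⟨h1, ?_⟩; simp only [Finset.mem_insert, Finset.mem_singleton]; omega
  have hTh : osTheta c (i : ℕ) = if ((c i : ℕ)) ≠ 0 then (1:ℚ) else 0 := by
    unfold osTheta
    rw [hvi]
  rw [hY1, hY2, hTh, fib_eq c hc i]
  rw [Nat.cast_sum]
  rw [← keyQ (f ((i : ℕ) : ℤ)) (f (((i : ℕ) : ℤ) - 1)) (f (((i : ℕ) : ℤ) - 2)) b a (c i)]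
  refine Finset.sum_congr rfl fun t _ => ?_
  rw [Nk_class (i : ℕ) a (t : ℕ)]
  obtain ⟨vA, vC, vB⟩ := vals (i : ℕ)
  rw [Nat.cast_ite, Nat.cast_zero]
  split_ifs with h1 h2 h3 <;> [rw [vB]; rw [vC]; rw [vA]; rfl]
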